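/- Let (v1, v2, v3, d) be positive integers with v_i < d such that: v1 divides d − v3, v2 divides d − v3, and gcd(v1, v2) divides d. Then there exist nonnegative integers a, b with a·v1 + b·v2 = d. -/

import Mathlib

theorem stmt16 (v1 v2 v3 d : ℕ) (h1 : 0 < v1) (h2 : 0 < v2) (h3 : 0 < v3)
    (hd1 : v1 < d) (hd2 : v2 < d) (hd3 : v3 < d)
    (hdiv1 : v1 ∣ d - v3) (hdiv2 : v2 ∣ d - v3)
    (hgcd : Nat.gcd v1 v2 ∣ d) :
    ∃ a b : ℕ, a * v1 + b * v2 = d := by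
  set g := Nat.gcd v1 v2 with hg
  have hg0 : 0 < g := Nat.gcd_pos_of_pos_left _ h1
  set m := v1 / g with hmdef
  set n := v2 / g with hndef
  have hm : v1 = g * m := by
    rw [hmdef]; exact (Nat.mul_div_cancel' (Nat.gcd_dvd_left v1 v2)).symm
  have hn : v2 = g * n := by
    rw [hndef]; exact (Nat.mul_div_cancel' (Nat.gcd_dvd_right v1 v2)).symm
  have cop : Nat.Coprime m n := Nat.coprime_div_gcd_div_gcd hg0
  obtain ⟨e, he⟩ := hgcd
  have hm0 : 0 < m := by
    rcases Nat.eq_zero_or_pos m with h | h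
    · rw [h, mul_zero] at hm; omega
    · exact h
  have hn0 : 0 < n := by
    rcases Nat.eq_zero_or_pos n with h | h
    · rw [h, mul_zero] at hn; omega
    · exact h
  -- lcm bound
  have hlcm : Nat.lcm v1 v2 ∣ d - v3 := Nat.lcm_dvd hdiv1 hdiv2
  have hdv3 : 0 < d - v3 := by omega
  have hlcm_le : Nat.lcm v1 v2 ≤ d - v3 := Nat.le_of_dvd hdv3 hlcm
  have hlcm_eq : Nat.lcm v1 v2 = g * (m * n) := by
    have := Nat.gcd_mul_lcm v1 v2
    rw [← hg] at this
    have h2' : g * (g * (m * n)) = v1 * v2 := by rw [hm, hn]; ring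
    have := this.trans h2'.symm
    exact Nat.eq_of_mul_eq_mul_left hg0 this
  have hmn_lt : m * n < e := by
    have : g * (m * n) < g * e := by
      rw [← hlcm_eq, ← he]; omega
    exact lt_of_mul_lt_mul_left this (Nat.zero_le g)
  rcases eq_or_lt_of_le (show 1 ≤ m from hm0) with hm1 | hm1
  · exact ⟨e, 0, by simp [hm, ← hm1, he, mul_comm]⟩
  rcases eq_or_lt_of_le (show 1 ≤ n from hn0) with hn1 | hn1
  · exact ⟨0, e, by simp [hn, ← hn1, he, mul_comm]⟩
  have hfrob := (frobeniusNumber_pair cop hm1 hn1).2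
  have he_mem : e ∈ AddSubmonoid.closure ({m, n} : Set ℕ) := by
    by_contra h
    have := hfrob h
    have : m * n - m - n < e := by omega
    omega
  rw [AddSubmonoid.mem_closure_pair] at he_mem
  obtain ⟨a, b, hab⟩ := he_mem
  refine ⟨a, b, ?_⟩
  simp only [smul_eq_mul] at hab
  rw [hm, hn, he]
  calc a * (g * m) + b * (g * n) = g * (a * m + b * n) := by ring
  _ = g * e := by rw [hab]
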